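/- For every real u, Ai(iu) ≠ 0; that is, the Airy function Ai has no zeros on the imaginary axis. -/

import Mathlib

set_option maxHeartbeats 1000000

open Complex

/-- The Airy function `Ai`, defined by its power series. -/
noncomputable def Ai (z : ℂ) : ℂ :=
  (3 : ℂ) ^ (-(2 : ℂ) / 3) *
      ∑' n : ℕ, z ^ (3 * n) / ((9 : ℂ) ^ n * (Nat.factorial n : ℂ) * Complex.Gamma ((n : ℂ) + 2 / 3)) -
    (3 : ℂ) ^ (-(4 : ℂ) / 3) *
      ∑' n : ℕ, z ^ (3 * n + 1) / ((9 : ℂ) ^ n * (Nat.factorial n : ℂ) * Complex.Gamma ((n : ℂ) + 4 / 3))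

section AiryAux

/-- auxiliary denominator sequence -/
noncomputable def aa (c : ℝ) (n : ℕ) : ℝ := 9 ^ n * n.factorial * Real.Gamma (n + c)

lemma aa_pos {c : ℝ} (hc : 0 < c) (n : ℕ) : 0 < aa c n := by
  have := Real.Gamma_pos_of_pos (show (0:ℝ) < n + c by positivity)
  unfold aa; positivity

lemma cast_aa (c : ℝ) (n : ℕ) :
    (9:ℂ) ^ n * (n.factorial : ℂ) * Complex.Gamma ((n:ℂ) + c) = ((aa c n : ℝ) : ℂ) := by
  have h : ((n:ℂ) + c) = (((n:ℝ) + c : ℝ) : ℂ) := by push_cast; ring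
  rw [h, Complex.Gamma_ofReal, aa]; push_cast; ring

lemma aa_rec {c : ℝ} (hc : 0 < c) (n : ℕ) :
    aa c (n + 1) = 9 * ((n:ℝ) + 1) * ((n:ℝ) + c) * aa c n := by
  have h0 : ((n:ℝ) + c) ≠ 0 := by positivity
  have h1 : ((n+1 : ℕ):ℝ) + c = ((n:ℝ) + c) + 1 := by push_cast; ring
  unfold aa
  rw [h1, Real.Gamma_add_one h0, Nat.factorial_succ]
  push_cast; ring

lemma gamma_lb {c : ℝ} (hc : 2/3 ≤ c) (n : ℕ) :
    Real.Gamma c * (2/3) ^ n ≤ Real.Gamma ((n:ℝ) + c) := by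
  have hc0 : (0:ℝ) < c := lt_of_lt_of_le (by norm_num) hc
  induction n with
  | zero => simp
  | succ n ih =>
    have h0 : ((n:ℝ) + c) ≠ 0 := by positivity
    have h1 : ((n+1 : ℕ):ℝ) + c = ((n:ℝ) + c) + 1 := by push_cast; ring
    rw [h1, Real.Gamma_add_one h0, pow_succ]
    have h2 : (2:ℝ)/3 ≤ (n:ℝ) + c := le_add_of_nonneg_of_le (Nat.cast_nonneg n) hc
    calc Real.Gamma c * ((2/3)^n * (2/3))
        = (Real.Gamma c * (2/3)^n) * (2/3) := by ring
      _ ≤ Real.Gamma ((n:ℝ) + c) * ((n:ℝ) + c) := by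
          apply mul_le_mul ih h2 (by norm_num)
          exact (Real.Gamma_pos_of_pos (by positivity)).le
      _ = ((n:ℝ) + c) * Real.Gamma ((n:ℝ) + c) := by ring

lemma aa_lb {c : ℝ} (hc : 2/3 ≤ c) (n : ℕ) : 6 ^ n * n.factorial * Real.Gamma c ≤ aa c n := by
  have hc0 : (0:ℝ) < c := lt_of_lt_of_le (by norm_num) hc
  have h := gamma_lb hc n
  have h6 : (6:ℝ)^n = 9^n * (2/3)^n := by rw [← mul_pow]; norm_num
  unfold aa
  rw [h6]
  calc 9 ^ n * (2/3)^n * n.factorial * Real.Gamma c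
      = 9^n * (n.factorial : ℝ) * (Real.Gamma c * (2/3)^n) := by ring
    _ ≤ 9^n * (n.factorial : ℝ) * Real.Gamma ((n:ℝ) + c) := by
        apply mul_le_mul_of_nonneg_left h; positivity

/-- coefficient sequence -/
noncomputable def gg (c : ℝ) (n : ℕ) : ℂ := (((aa c n : ℝ) : ℂ))⁻¹

lemma hg_base {c : ℝ} (hc : 2/3 ≤ c) (k : ℕ) (R : ℝ) (hR : 1 ≤ R) :
    Summable fun n => ‖gg c n‖ * R ^ (3*n+k) := by
  have hc0 : (0:ℝ) < c := lt_of_lt_of_le (by norm_num) hc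
  have hG := Real.Gamma_pos_of_pos hc0
  have hR0 : (0:ℝ) < R := lt_of_lt_of_le one_pos hR
  have hsum : Summable (fun n : ℕ => (R^3/6)^n / n.factorial * (R^k * (Real.Gamma c)⁻¹)) :=
    (Real.summable_pow_div_factorial (R^3/6)).mul_right _
  refine Summable.of_nonneg_of_le (fun n => by positivity) (fun n => ?_) hsum
  have hpos := aa_pos hc0 n
  have hlb := aa_lb hc n
  have hlb0 : (0:ℝ) < 6 ^ n * n.factorial * Real.Gamma c := by positivity
  rw [gg, norm_inv, Complex.norm_real, Real.norm_eq_abs, abs_of_pos hpos]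
  calc (aa c n)⁻¹ * R ^ (3*n+k)
      ≤ (6 ^ n * n.factorial * Real.Gamma c)⁻¹ * R ^ (3*n+k) := by
        apply mul_le_mul_of_nonneg_right (inv_anti₀ hlb0 hlb) (by positivity)
    _ = (R^3/6)^n / n.factorial * (R^k * (Real.Gamma c)⁻¹) := by
        rw [div_pow, pow_add, pow_mul, mul_inv, mul_inv]
        ring

lemma hg_step (g : ℕ → ℂ) (m : ℕ → ℕ)
    (hg : ∀ R : ℝ, 1 ≤ R → Summable fun n => ‖g n‖ * R ^ m n) :
    ∀ R : ℝ, 1 ≤ R → Summable fun n => ‖g n * (m n : ℂ)‖ * R ^ (m n - 1) := by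
  intro R hR
  have hR0 : (0:ℝ) < R := lt_of_lt_of_le one_pos hR
  have h2R : (1:ℝ) ≤ 2*R := by linarith
  refine Summable.of_nonneg_of_le (fun n => by positivity) (fun n => ?_) (hg (2*R) h2R)
  rw [norm_mul, Complex.norm_natCast]
  calc ‖g n‖ * (m n : ℝ) * R ^ (m n - 1)
      ≤ ‖g n‖ * ((2:ℝ)^(m n) * R ^ (m n)) := by
        rw [mul_assoc]
        apply mul_le_mul_of_nonneg_left _ (norm_nonneg _)
        apply mul_le_mul _ (pow_le_pow_right₀ hR (Nat.sub_le _ _)) (by positivity) (by positivity)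
        exact_mod_cast (Nat.lt_two_pow_self (n := m n)).le
    _ = ‖g n‖ * (2*R) ^ (m n) := by rw [mul_pow]

lemma key (g : ℕ → ℂ) (m : ℕ → ℕ)
    (hg : ∀ R : ℝ, 1 ≤ R → Summable fun n => ‖g n‖ * R ^ m n) (z : ℂ) :
    HasDerivAt (fun w : ℂ => ∑' n, g n * w ^ m n)
      (∑' n, g n * ((m n : ℂ) * z ^ (m n - 1))) z ∧
    (Summable fun n => g n * ((m n : ℂ) * z ^ (m n - 1))) ∧
    (Summable fun n => g n * z ^ m n) := by
  set R : ℝ := ‖z‖ + 1 with hRdef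
  have hR1 : 1 ≤ R := le_add_of_nonneg_left (norm_nonneg z)
  have hz : z ∈ Metric.ball (0:ℂ) R := by
    rw [mem_ball_zero_iff]; simp [hRdef]
  have hb : ∀ (n : ℕ) (w : ℂ), w ∈ Metric.ball (0:ℂ) R → ‖g n * w ^ m n‖ ≤ ‖g n‖ * R ^ m n := by
    intro n w hw
    rw [norm_mul, norm_pow]
    exact mul_le_mul_of_nonneg_left
      (pow_le_pow_left₀ (norm_nonneg w) (le_of_lt (mem_ball_zero_iff.mp hw)) _) (norm_nonneg _)
  have hdiff : ∀ n : ℕ, DifferentiableOn ℂ (fun w : ℂ => g n * w ^ m n) (Metric.ball (0:ℂ) R) :=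
    fun n => ((differentiable_pow (m n)).const_mul (g n)).differentiableOn
  have hS := differentiableOn_tsum_of_summable_norm (hg R hR1) hdiff Metric.isOpen_ball hb
  have hHS := hasSum_deriv_of_summable_norm (hg R hR1) hdiff Metric.isOpen_ball hb hz
  have hterm : ∀ n : ℕ, deriv (fun w : ℂ => g n * w ^ m n) z = g n * ((m n : ℂ) * z ^ (m n - 1)) :=
    fun n => ((hasDerivAt_pow (m n) z).const_mul (g n)).deriv
  simp_rw [hterm] at hHS
  refine ⟨?_, hHS.summable, ?_⟩
  · have h1 := (hS.differentiableAt (Metric.isOpen_ball.mem_nhds hz)).hasDerivAt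
    rwa [← hHS.tsum_eq] at h1
  · exact Summable.of_norm (Summable.of_nonneg_of_le (fun n => norm_nonneg _)
      (fun n => hb n z hz) (hg R hR1))

end AiryAux

lemma Ai_eq : Ai = fun z : ℂ =>
    (3 : ℂ) ^ (-(2 : ℂ) / 3) * ∑' n : ℕ, gg (2/3) n * z ^ (3*n) -
    (3 : ℂ) ^ (-(4 : ℂ) / 3) * ∑' n : ℕ, gg (4/3) n * z ^ (3*n+1) := by
  funext z
  unfold Ai
  congr 1
  · congr 1
    apply tsum_congr
    intro n
    have h := cast_aa (2/3) n
    have h23 : (((2:ℝ)/3 : ℝ) : ℂ) = 2/3 := by push_cast; ring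
    rw [h23] at h
    rw [h, gg, div_eq_mul_inv, mul_comm]
  · congr 1
    apply tsum_congr
    intro n
    have h := cast_aa (4/3) n
    have h43 : (((4:ℝ)/3 : ℝ) : ℂ) = 4/3 := by push_cast; ring
    rw [h43] at h
    rw [h, gg, div_eq_mul_inv, mul_comm]

section AiryDeriv

lemma hg1 : ∀ R : ℝ, 1 ≤ R → Summable fun n => ‖gg (2/3) n‖ * R ^ (3*n) := by
  intro R hR
  simpa using hg_base (c := 2/3) (by norm_num) 0 R hR

lemma hg2 : ∀ R : ℝ, 1 ≤ R → Summable fun n => ‖gg (4/3) n‖ * R ^ (3*n+1) := by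
  intro R hR
  exact hg_base (c := 4/3) (by norm_num) 1 R hR

/-- the derivative of the Airy function -/
noncomputable def Ai' (z : ℂ) : ℂ :=
  (3 : ℂ) ^ (-(2 : ℂ) / 3) * ∑' n : ℕ, gg (2/3) n * (((3*n : ℕ) : ℂ) * z ^ (3*n - 1)) -
  (3 : ℂ) ^ (-(4 : ℂ) / 3) * ∑' n : ℕ, gg (4/3) n * (((3*n+1 : ℕ) : ℂ) * z ^ (3*n+1 - 1))

lemma hasDerivAt_Ai (z : ℂ) : HasDerivAt Ai (Ai' z) z := by
  rw [Ai_eq]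
  exact ((key (gg (2/3)) (fun n => 3*n) hg1 z).1.const_mul _).sub
    ((key (gg (4/3)) (fun n => 3*n+1) hg2 z).1.const_mul _)

lemma gg_rec {c : ℝ} (hc : 0 < c) (k : ℕ) :
    gg c (k+1) * (9 * ((k:ℂ)+1) * ((k:ℂ)+(c:ℂ))) = gg c k := by
  unfold gg
  rw [aa_rec hc]
  have h1 : aa c k ≠ 0 := (aa_pos hc k).ne'
  have h9 : (9:ℝ) * ((k:ℝ)+1) * ((k:ℝ)+c) ≠ 0 := by positivity
  have h9' : (9:ℂ) * ((k:ℂ)+1) * ((k:ℂ)+(c:ℂ)) ≠ 0 := by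
    intro h
    apply h9
    exact_mod_cast h
  have h1' : ((aa c k : ℝ) : ℂ) ≠ 0 := by exact_mod_cast h1
  push_cast
  field_simp
  exact div_self (right_ne_zero_of_mul h9')

lemma sumA (z : ℂ) :
    ∑' n : ℕ, (gg (2/3) n * ((3*n : ℕ):ℂ)) * (((3*n-1 : ℕ):ℂ) * z^(3*n-1-1)) =
      ∑' n : ℕ, gg (2/3) n * z^(3*n+1) := by
  have hs := (key (fun n => gg (2/3) n * ((3*n : ℕ):ℂ)) (fun n => 3*n-1)
    (hg_step _ _ hg1) z).2.1
  rw [Summable.tsum_eq_zero_add hs]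
  have h0 : (gg (2/3) 0 * ((3*0 : ℕ):ℂ)) * (((3*0-1 : ℕ):ℂ) * z^(3*0-1-1)) = 0 := by
    norm_num
  rw [h0, zero_add]
  apply tsum_congr
  intro k
  have e1 : 3*(k+1) = 3*k+3 := by ring
  have e2 : 3*(k+1)-1 = 3*k+2 := by omega
  have e3 : 3*(k+1)-1-1 = 3*k+1 := by omega
  rw [e3, e2, e1]
  have hrec := gg_rec (c := 2/3) (by norm_num) k
  calc (gg (2/3) (k+1) * ((3*k+3 : ℕ):ℂ)) * (((3*k+2 : ℕ):ℂ) * z^(3*k+1))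
      = gg (2/3) (k+1) * (9 * ((k:ℂ)+1) * ((k:ℂ)+((2/3:ℝ):ℂ))) * z^(3*k+1) := by
        push_cast; ring
    _ = gg (2/3) k * z^(3*k+1) := by rw [hrec]

lemma sumB (z : ℂ) :
    ∑' n : ℕ, (gg (4/3) n * ((3*n+1 : ℕ):ℂ)) * (((3*n+1-1 : ℕ):ℂ) * z^(3*n+1-1-1)) =
      ∑' n : ℕ, gg (4/3) n * z^(3*n+2) := by
  have hs := (key (fun n => gg (4/3) n * ((3*n+1 : ℕ):ℂ)) (fun n => 3*n+1-1)
    (hg_step _ _ hg2) z).2.1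
  rw [Summable.tsum_eq_zero_add hs]
  have h0 : (gg (4/3) 0 * ((3*0+1 : ℕ):ℂ)) * (((3*0+1-1 : ℕ):ℂ) * z^(3*0+1-1-1)) = 0 := by
    norm_num
  rw [h0, zero_add]
  apply tsum_congr
  intro k
  have e1 : 3*(k+1)+1 = 3*k+4 := by ring
  have e2 : 3*(k+1)+1-1 = 3*k+3 := by omega
  have e3 : 3*(k+1)+1-1-1 = 3*k+2 := by omega
  rw [e3, e2, e1]
  have hrec := gg_rec (c := 4/3) (by norm_num) k
  calc (gg (4/3) (k+1) * ((3*k+4 : ℕ):ℂ)) * (((3*k+3 : ℕ):ℂ) * z^(3*k+2))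
      = gg (4/3) (k+1) * (9 * ((k:ℂ)+1) * ((k:ℂ)+((4/3:ℝ):ℂ))) * z^(3*k+2) := by
        push_cast; ring
    _ = gg (4/3) k * z^(3*k+2) := by rw [hrec]

lemma Ai'_eq : Ai' = fun z : ℂ =>
    (3 : ℂ) ^ (-(2 : ℂ) / 3) * ∑' n : ℕ, (gg (2/3) n * ((3*n : ℕ):ℂ)) * z ^ (3*n-1) -
    (3 : ℂ) ^ (-(4 : ℂ) / 3) * ∑' n : ℕ, (gg (4/3) n * ((3*n+1 : ℕ):ℂ)) * z ^ (3*n+1-1) := by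
  funext z
  unfold Ai'
  congr 1
  · congr 1
    exact tsum_congr fun n => (mul_assoc _ _ _).symm
  · congr 1
    exact tsum_congr fun n => (mul_assoc _ _ _).symm

lemma hasDerivAt_Ai' (z : ℂ) : HasDerivAt Ai' (z * Ai z) z := by
  have k1 := key (fun n => gg (2/3) n * ((3*n : ℕ):ℂ)) (fun n => 3*n-1) (hg_step _ _ hg1) z
  have k2 := key (fun n => gg (4/3) n * ((3*n+1 : ℕ):ℂ)) (fun n => 3*n+1-1) (hg_step _ _ hg2) z
  have h := (k1.1.const_mul ((3 : ℂ) ^ (-(2 : ℂ) / 3))).sub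
    (k2.1.const_mul ((3 : ℂ) ^ (-(4 : ℂ) / 3)))
  rw [Ai'_eq]
  refine h.congr_deriv ?_
  rw [sumA z, sumB z, Ai_eq]
  have t1 : ∑' n : ℕ, gg (2/3) n * z^(3*n+1) = z * ∑' n : ℕ, gg (2/3) n * z^(3*n) := by
    rw [← tsum_mul_left]
    exact tsum_congr fun n => by ring
  have t2 : ∑' n : ℕ, gg (4/3) n * z^(3*n+2) = z * ∑' n : ℕ, gg (4/3) n * z^(3*n+1) := by
    rw [← tsum_mul_left]
    exact tsum_congr fun n => by ring
  rw [t1, t2]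
  ring

/-- `Ai 0` as a real number -/
noncomputable def r1 : ℝ := 3 ^ (-(2:ℝ)/3) * (Real.Gamma (2/3))⁻¹

/-- `-Ai' 0` as a real number -/
noncomputable def r2 : ℝ := 3 ^ (-(4:ℝ)/3) * (Real.Gamma (4/3))⁻¹

lemma r1_pos : 0 < r1 := by
  have := Real.Gamma_pos_of_pos (show (0:ℝ) < 2/3 by norm_num)
  have h3 : (0:ℝ) < 3 ^ (-(2:ℝ)/3) := Real.rpow_pos_of_pos (by norm_num) _
  unfold r1; positivity

lemma r2_pos : 0 < r2 := by
  have := Real.Gamma_pos_of_pos (show (0:ℝ) < 4/3 by norm_num)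
  have h3 : (0:ℝ) < 3 ^ (-(4:ℝ)/3) := Real.rpow_pos_of_pos (by norm_num) _
  unfold r2; positivity

lemma cast_c1 : (3 : ℂ) ^ (-(2 : ℂ) / 3) = (((3:ℝ) ^ (-(2:ℝ)/3) : ℝ) : ℂ) := by
  rw [Complex.ofReal_cpow (by norm_num : (0:ℝ) ≤ 3)]
  norm_num

lemma cast_c2 : (3 : ℂ) ^ (-(4 : ℂ) / 3) = (((3:ℝ) ^ (-(4:ℝ)/3) : ℝ) : ℂ) := by
  rw [Complex.ofReal_cpow (by norm_num : (0:ℝ) ≤ 3)]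
  norm_num

lemma gg_zero (c : ℝ) : gg c 0 = (((Real.Gamma c : ℝ)) : ℂ)⁻¹ := by
  unfold gg aa
  norm_num

lemma Ai_zero : Ai 0 = (r1 : ℂ) := by
  rw [Ai_eq]
  have h1 : ∑' n : ℕ, gg (2/3) n * (0:ℂ) ^ (3*n) = gg (2/3) 0 := by
    rw [tsum_eq_single 0]
    · norm_num
    · intro n hn
      rw [zero_pow (by omega : 3*n ≠ 0), mul_zero]
  have h2 : ∑' n : ℕ, gg (4/3) n * (0:ℂ) ^ (3*n+1) = 0 := by
    have : ∀ n : ℕ, gg (4/3) n * (0:ℂ) ^ (3*n+1) = 0 := fun n => by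
      rw [zero_pow (by omega : 3*n+1 ≠ 0), mul_zero]
    rw [tsum_congr this, tsum_zero]
  simp only [h1, h2, mul_zero, sub_zero, gg_zero, cast_c1]
  rw [r1]
  push_cast
  ring

lemma Ai'_zero : Ai' 0 = -(r2 : ℂ) := by
  unfold Ai'
  have h1 : ∑' n : ℕ, gg (2/3) n * (((3*n : ℕ) : ℂ) * (0:ℂ) ^ (3*n-1)) = 0 := by
    have : ∀ n : ℕ, gg (2/3) n * (((3*n : ℕ) : ℂ) * (0:ℂ) ^ (3*n-1)) = 0 := by
      intro n
      match n with
      | 0 => norm_num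
      | (m+1) => rw [zero_pow (by omega : 3*(m+1)-1 ≠ 0), mul_zero, mul_zero]
    rw [tsum_congr this, tsum_zero]
  have h2 : ∑' n : ℕ, gg (4/3) n * (((3*n+1 : ℕ) : ℂ) * (0:ℂ) ^ (3*n+1-1)) = gg (4/3) 0 := by
    rw [tsum_eq_single 0]
    · norm_num
    · intro n hn
      rw [zero_pow (by omega : 3*n+1-1 ≠ 0), mul_zero, mul_zero]
  simp only [h1, h2, mul_zero, zero_sub, gg_zero, cast_c2]
  rw [r2]
  push_cast
  ring

end AiryDeriv

section AiryODE

/-- the Airy function along the imaginary axis -/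
noncomputable def FF (t : ℝ) : ℂ := Ai (I * t)

/-- the derivative of the Airy function along the imaginary axis -/
noncomputable def FF1 (t : ℝ) : ℂ := I * Ai' (I * t)

lemma hasDerivAt_FF (t : ℝ) : HasDerivAt FF (FF1 t) t := by
  have hin : HasDerivAt (fun w : ℂ => Ai (I * w)) (Ai' (I * (t:ℂ)) * (I * 1)) (t:ℂ) :=
    (hasDerivAt_Ai (I * (t:ℂ))).comp _ ((hasDerivAt_id _).const_mul I)
  have h := hin.comp_ofReal
  have : Ai' (I * (t:ℂ)) * (I * 1) = FF1 t := by rw [FF1]; ring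
  rwa [this] at h

lemma hasDerivAt_FF1 (t : ℝ) : HasDerivAt FF1 (-(I * t) * FF t) t := by
  have hin : HasDerivAt (fun w : ℂ => Ai' (I * w)) ((I * (t:ℂ)) * Ai (I * (t:ℂ)) * (I * 1)) (t:ℂ) :=
    (hasDerivAt_Ai' (I * (t:ℂ))).comp _ ((hasDerivAt_id _).const_mul I)
  have h := (hin.comp_ofReal).const_mul I
  have : I * ((I * (t:ℂ)) * Ai (I * (t:ℂ)) * (I * 1)) = -(I * t) * FF t := by
    rw [FF]
    linear_combination (I * (t:ℂ) * Ai (I * (t:ℂ))) * Complex.I_sq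
  rwa [this] at h

/-- the imaginary part of `conj F * F'` -/
noncomputable def HH (t : ℝ) : ℝ := (star (FF t) * FF1 t).im

lemma hasDerivAt_HH (t : ℝ) : HasDerivAt HH (-t * Complex.normSq (FF t)) t := by
  have hconj : HasDerivAt (fun s : ℝ => star (FF s)) (star (FF1 t)) t := (hasDerivAt_FF t).star
  have hprod := hconj.mul (hasDerivAt_FF1 t)
  have him := (Complex.imCLM.hasFDerivAt).comp_hasDerivAt t hprod
  have hval : (star (FF1 t) * FF1 t + star (FF t) * (-(I * t) * FF t)).im
      = -t * Complex.normSq (FF t) := by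
    have e1 : star (FF1 t) * FF1 t = (Complex.normSq (FF1 t) : ℂ) := by
      rw [Complex.star_def, mul_comm, Complex.mul_conj]
    have e2 : star (FF t) * (-(I * t) * FF t) = -(I * t) * (Complex.normSq (FF t) : ℂ) := by
      rw [Complex.star_def]
      rw [show (starRingEnd ℂ) (FF t) * (-(I * ↑t) * FF t)
          = -(I * ↑t) * (FF t * (starRingEnd ℂ) (FF t)) by ring, Complex.mul_conj]
    rw [e1, e2]
    simp
  rw [← hval]
  exact him

lemma HH_zero : HH 0 = -(r1 * r2) := by
  have hF0 : FF 0 = (r1 : ℂ) := by rw [FF]; norm_num [Ai_zero]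
  have hF10 : FF1 0 = I * -(r2 : ℂ) := by rw [FF1]; norm_num [Ai'_zero]
  rw [HH, hF0, hF10]
  simp

end AiryODE

/-- The Airy function `Ai` has no zeros on the imaginary axis. -/
theorem airy_ne_zero_on_imaginary_axis (u : ℝ) : Ai (Complex.I * u) ≠ 0 := by
  intro h
  have hFu : FF u = 0 := h
  have hHu : HH u = 0 := by rw [HH, hFu]; simp
  have hH0 : HH 0 < 0 := by
    rw [HH_zero]
    have := mul_pos r1_pos r2_pos
    linarith
  have hdiff : Differentiable ℝ HH := fun t => (hasDerivAt_HH t).differentiableAt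
  rcases lt_trichotomy u 0 with hu | hu | hu
  · have hmono : MonotoneOn HH (Set.Icc u 0) := by
      apply monotoneOn_of_deriv_nonneg (convex_Icc u 0) hdiff.continuous.continuousOn
        hdiff.differentiableOn
      intro x hx
      rw [interior_Icc] at hx
      rw [(hasDerivAt_HH x).deriv]
      have hx0 : x < 0 := hx.2
      have := Complex.normSq_nonneg (FF x)
      nlinarith
    have := hmono (Set.left_mem_Icc.mpr hu.le) (Set.right_mem_Icc.mpr hu.le) hu.le
    rw [hHu] at this
    linarith
  · rw [hu] at hHu
    linarith
  · have hmono : AntitoneOn HH (Set.Icc 0 u) := by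
      apply antitoneOn_of_deriv_nonpos (convex_Icc 0 u) hdiff.continuous.continuousOn
        hdiff.differentiableOn
      intro x hx
      rw [interior_Icc] at hx
      rw [(hasDerivAt_HH x).deriv]
      have hx0 : 0 < x := hx.1
      have := Complex.normSq_nonneg (FF x)
      nlinarith
    have := hmono (Set.left_mem_Icc.mpr hu.le) (Set.right_mem_Icc.mpr hu.le) hu.le
    rw [hHu] at this
    linarith
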